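/- arXiv:1110.3436 — 2 statements merged into one kernel-verified Lean document; each statement's English description precedes it below -/
import Mathlib

section
/- Let F be a cumulative distribution function on ℝ with density f > 0 on (x_F, x^F), quantile function Q(t) = inf{x : F(x) ≥ t}, and quantile density q(x) = 1/f(Q(x)). If the differential entropy H = -∫_ℝ f(x) log f(x) dx is finite, then H = ∫_0^1 log(q(x)) dx. -/
open MeasureTheory Filter Set
open scoped ENNReal NNReal

/-- If `F` is a cdf on `ℝ` with density `f > 0` on `(x_F, x^F)`, quantile function
`Q(t) = inf {x : F x ≥ t}` and quantile density `q = 1/(f ∘ Q)`, and the differential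
entropy `H = -∫ f log f` is finite, then `H = ∫_0^1 log q(x) dx`. -/
theorem entropy_eq_integral_log_quantile_density
    (F f Q q : ℝ → ℝ) (xF xS : EReal)
    (hmono : Monotone F)
    (hbot : Tendsto F atBot (nhds 0)) (htop : Tendsto F atTop (nhds 1))
    (hdens : ∀ x, F x = ∫ t in Set.Iic x, f t)
    (hf0 : ∀ x, 0 ≤ f x)
    (hxF : xF = sSup ((fun x : ℝ => (x : EReal)) '' {x | F x = 0}))
    (hxS : xS = sInf ((fun x : ℝ => (x : EReal)) '' {x | F x = 1}))
    (hfpos : ∀ x : ℝ, xF < (x : EReal) → (x : EReal) < xS → 0 < f x)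
    (hQ : ∀ t, Q t = sInf {x | t ≤ F x})
    (hq : ∀ x, q x = 1 / f (Q x))
    (hH : Integrable (fun x => f x * Real.log (f x))) :
    - ∫ x, f x * Real.log (f x) = ∫ x in Set.Ioo (0 : ℝ) 1, Real.log (q x) := by
  have hF0 : ∀ x, 0 ≤ F x := fun x =>
    le_of_tendsto hbot (eventually_atBot.2 ⟨x, fun y hy => hmono hy⟩)
  have hF1 : ∀ x, F x ≤ 1 := fun x =>
    ge_of_tendsto htop (eventually_atTop.2 ⟨x, fun y hy => hmono hy⟩)
  -- integrability of f on each Iic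
  have hInt : ∀ x : ℝ, IntegrableOn f (Set.Iic x) := by
    by_contra h
    push_neg at h
    obtain ⟨x₀, hx₀⟩ := h
    have hzero : ∀ᶠ y in atTop, F y = 0 := by
      filter_upwards [eventually_ge_atTop x₀] with y hy
      rw [hdens]
      exact integral_undef (fun hc => hx₀ (IntegrableOn.mono_set hc (Set.Iic_subset_Iic.2 hy)))
    have h0 : Tendsto F atTop (nhds 0) :=
      Tendsto.congr' (hzero.mono fun y hy => hy.symm) tendsto_const_nhds
    exact one_ne_zero (tendsto_nhds_unique htop h0)
  -- a measurable version g of f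
  have hunion : (⋃ n : ℕ, Set.Iic (n : ℝ)) = Set.univ := by
    ext x
    simp only [Set.mem_iUnion, Set.mem_Iic, Set.mem_univ, iff_true]
    exact ⟨⌈x⌉₊, Nat.le_ceil x⟩
  have hfm : AEStronglyMeasurable f (volume : Measure ℝ) := by
    have := aestronglyMeasurable_iUnion_iff.2
      (fun n : ℕ => (hInt (n : ℝ)).aestronglyMeasurable)
    rwa [hunion, Measure.restrict_univ] at this
  set g : ℝ → ℝ := hfm.mk f with hgdef
  have hgmeas : StronglyMeasurable g := hfm.stronglyMeasurable_mk
  have hfg : f =ᵐ[volume] g := hfm.ae_eq_mk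
  have hg0 : ∀ᵐ x ∂(volume : Measure ℝ), 0 ≤ g x := by
    filter_upwards [hfg] with x hx
    rw [← hx]; exact hf0 x
  -- the measure with density g
  set μ : Measure ℝ := volume.withDensity (fun x => ENNReal.ofReal (g x)) with hμdef
  have hμIic : ∀ x, μ (Set.Iic x) = ENNReal.ofReal (F x) := by
    intro x
    have hgint : IntegrableOn g (Set.Iic x) := (hInt x).congr (ae_restrict_of_ae hfg)
    rw [hμdef, withDensity_apply _ measurableSet_Iic,
      ← ofReal_integral_eq_lintegral_ofReal hgint (ae_restrict_of_ae hg0),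
      hdens x]
    congr 1
    exact integral_congr_ae (ae_restrict_of_ae hfg.symm)
  have hμfin : IsFiniteMeasure μ := by
    constructor
    have hmono' : Monotone (fun n : ℕ => Set.Iic ((n : ℝ))) :=
      fun i j hij => Set.Iic_subset_Iic.2 (Nat.cast_le.2 hij)
    have key : μ Set.univ = ⨆ n : ℕ, μ (Set.Iic (n : ℝ)) := by
      rw [← hunion]
      exact hmono'.measure_iUnion
    rw [key]
    refine lt_of_le_of_lt (iSup_le fun n => ?_) ENNReal.one_lt_top
    rw [hμIic]
    exact ENNReal.ofReal_le_one.2 (hF1 _)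
  -- continuity of F
  have hIntInterval : ∀ a b : ℝ, IntervalIntegrable f volume a b := fun a b =>
    intervalIntegrable_iff.2 ((hInt (max a b)).mono_set (fun t ht => ht.2))
  have hFcont : Continuous F := by
    have h1 : Continuous (fun b => ∫ x in (0 : ℝ)..b, f x) :=
      intervalIntegral.continuous_primitive hIntInterval 0
    have h2 : ∀ b, F b = F 0 + ∫ x in (0 : ℝ)..b, f x := fun b => by
      rw [← intervalIntegral.integral_Iic_sub_Iic (hInt 0) (hInt b), hdens b, hdens 0]
      ring
    have h3 : Continuous fun b => F 0 + ∫ x in (0 : ℝ)..b, f x := continuous_const.add h1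
    exact h3.congr fun b => (h2 b).symm
  -- Galois connection for Q on (0,1)
  have hGal : ∀ u : ℝ, 0 < u → u < 1 → ∀ x, (Q u ≤ x ↔ u ≤ F x) := by
    intro u hu0 hu1
    have hSne : {x | u ≤ F x}.Nonempty :=
      (htop.eventually (eventually_ge_nhds hu1)).exists
    have hSbb : BddBelow {x | u ≤ F x} := by
      obtain ⟨a, ha⟩ := eventually_atBot.1 (hbot.eventually (eventually_lt_nhds hu0))
      exact ⟨a, fun x hx => le_of_not_gt fun hxa => (ha x hxa.le).not_ge hx⟩
    have hScl : IsClosed {x | u ≤ F x} := isClosed_le continuous_const hFcont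
    have hmem : u ≤ F (Q u) := by
      have := hScl.csInf_mem hSne hSbb
      rwa [← hQ u] at this
    intro x
    constructor
    · intro h; exact le_trans hmem (hmono h)
    · intro h; rw [hQ]; exact csInf_le hSbb h
  have hpre : ∀ x, Q ⁻¹' Set.Iic x ∩ Set.Ioo 0 1 = Set.Iic (F x) ∩ Set.Ioo 0 1 := by
    intro x
    ext u
    simp only [Set.mem_inter_iff, Set.mem_preimage, Set.mem_Iic, Set.mem_Ioo,
      and_congr_left_iff]
    rintro ⟨h0, h1⟩
    exact hGal u h0 h1 x
  -- measurability of Q on (0,1)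
  set G : ℝ → ℝ := (Set.Ioo (0 : ℝ) 1).indicator Q with hGdef
  have hGmeas : Measurable G := by
    apply measurable_of_Iic
    intro x
    by_cases h0 : (0 : ℝ) ≤ x
    · have : G ⁻¹' Set.Iic x = (Set.Iic (F x) ∩ Set.Ioo 0 1) ∪ (Set.Ioo 0 1)ᶜ := by
        ext u
        by_cases hu : u ∈ Set.Ioo (0 : ℝ) 1
        · simp [hGdef, Set.indicator_of_mem hu, hu, hGal u hu.1 hu.2 x]
        · simp [hGdef, Set.indicator_of_notMem hu, hu, h0]
      rw [this]
      exact ((measurableSet_Iic.inter measurableSet_Ioo).union measurableSet_Ioo.compl)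
    · have : G ⁻¹' Set.Iic x = Set.Iic (F x) ∩ Set.Ioo 0 1 := by
        ext u
        by_cases hu : u ∈ Set.Ioo (0 : ℝ) 1
        · simp [hGdef, Set.indicator_of_mem hu, hu, hGal u hu.1 hu.2 x]
        · simp [hGdef, Set.indicator_of_notMem hu, hu, h0]
      rw [this]
      exact measurableSet_Iic.inter measurableSet_Ioo
  have hQae : AEMeasurable Q (volume.restrict (Set.Ioo (0 : ℝ) 1)) :=
    ⟨G, hGmeas, (ae_restrict_iff' measurableSet_Ioo).2
      (ae_of_all _ fun u hu => (Set.indicator_of_mem hu Q).symm)⟩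
  set ν : Measure ℝ := (volume.restrict (Set.Ioo (0 : ℝ) 1)).map Q with hνdef
  have hνIic : ∀ x, ν (Set.Iic x) = ENNReal.ofReal (F x) := by
    intro x
    rw [hνdef, Measure.map_apply_of_aemeasurable hQae measurableSet_Iic,
      Measure.restrict_apply' measurableSet_Ioo, hpre x]
    have hup : Set.Iic (F x) ∩ Set.Ioo 0 1 ⊆ Set.Ioc 0 (F x) :=
      fun u hu => ⟨hu.2.1, hu.1⟩
    have hlo : Set.Ioo 0 (F x) ⊆ Set.Iic (F x) ∩ Set.Ioo 0 1 :=
      fun u hu => ⟨hu.2.le, hu.1, lt_of_lt_of_le hu.2 (hF1 x)⟩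
    refine le_antisymm ?_ ?_
    · calc volume (Set.Iic (F x) ∩ Set.Ioo 0 1) ≤ volume (Set.Ioc 0 (F x)) :=
          measure_mono hup
        _ = ENNReal.ofReal (F x) := by rw [Real.volume_Ioc, sub_zero]
    · have hv : volume (Set.Ioo (0 : ℝ) (F x)) = ENNReal.ofReal (F x) := by
        rw [Real.volume_Ioo, sub_zero]
      rw [← hv]
      exact measure_mono hlo
  have hμν : μ = ν := by
    haveI := hμfin
    refine Measure.ext_of_Iic μ ν fun a => ?_
    rw [hμIic, hνIic]
  -- transfer of the a.e. equality f = g along Q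
  set t : Set ℝ := toMeasurable volume {x | f x ≠ g x} with htdef
  have ht0 : volume t = 0 := by
    rw [htdef, measure_toMeasurable]
    exact ae_iff.1 hfg
  have hνt : ν t = 0 := by
    rw [← hμν, hμdef]
    exact (withDensity_absolutelyContinuous _ _) ht0
  have hQt : (volume.restrict (Set.Ioo (0 : ℝ) 1)) (Q ⁻¹' t) = 0 := by
    rw [← Measure.map_apply_of_aemeasurable hQae (measurableSet_toMeasurable _ _)]
    exact hνt
  have haefg : ∀ᵐ u ∂(volume.restrict (Set.Ioo (0 : ℝ) 1)), f (Q u) = g (Q u) := by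
    have h1 : ∀ᵐ u ∂(volume.restrict (Set.Ioo (0 : ℝ) 1)), Q u ∉ t := by
      rw [ae_iff]
      simpa [Set.preimage] using hQt
    filter_upwards [h1] with u hu
    by_contra hne
    exact hu (subset_toMeasurable _ _ hne)
  -- compute the integrals
  have hlogg : Measurable fun x => Real.log (g x) :=
    Real.measurable_log.comp hgmeas.measurable
  have step1 : ∫ u in Set.Ioo (0 : ℝ) 1, Real.log (q u)
      = ∫ u in Set.Ioo (0 : ℝ) 1, - Real.log (g (Q u)) := by
    refine integral_congr_ae ?_
    filter_upwards [haefg] with u hu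
    rw [hq u, hu, one_div, Real.log_inv]
  have step2 : ∫ u in Set.Ioo (0 : ℝ) 1, Real.log (g (Q u))
      = ∫ x, Real.log (g x) ∂ν := by
    rw [hνdef, integral_map hQae hlogg.aestronglyMeasurable]
  have step3 : ∫ x, Real.log (g x) ∂μ = ∫ x, f x * Real.log (f x) := by
    have hμ' : μ = volume.withDensity (fun x => ((Real.toNNReal (g x) : ℝ≥0) : ℝ≥0∞)) := rfl
    rw [hμ', integral_withDensity_eq_integral_smul
      (hgmeas.measurable.real_toNNReal) (fun x => Real.log (g x))]
    refine integral_congr_ae ?_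
    filter_upwards [hfg, hg0] with x hx hx0
    show (Real.toNNReal (g x) : ℝ≥0) • Real.log (g x) = f x * Real.log (f x)
    rw [NNReal.smul_def, Real.coe_toNNReal _ hx0, ← hx, smul_eq_mul]
  rw [step1, integral_neg, step2, ← hμν, step3]
end

section
/- Let q : (0,1) → (0,∞) be continuously differentiable with ∫_0^1 log² q(x) dx < ∞, and set J = q'/q. Then ∫_0^1 ∫_0^1 J(u) J(v) (min(u,v) - uv) du dv = ∫_0^1 log² q(x) dx - (∫_0^1 log q(x) dx)², provided t·log q(t) → 0 and (1-t)·log q(t) → 0 at the endpoints. -/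
open MeasureTheory Filter

open Set Topology

private lemma aux_tendsto_setIntegral {W : ℝ → ℝ} (hW : IntegrableOn W (Ioo 0 1))
    (s : ℕ → Set ℝ) (t : Set ℝ) (hs : ∀ n, MeasurableSet (s n)) (hssub : ∀ n, s n ⊆ Ioo 0 1)
    (ht : MeasurableSet t) (htsub : t ⊆ Ioo 0 1)
    (hpt : ∀ x ∈ Ioo (0:ℝ) 1,
      Tendsto (fun n => (s n).indicator W x) atTop (𝓝 (t.indicator W x))) :
    Tendsto (fun n => ∫ x in s n, W x) atTop (𝓝 (∫ x in t, W x)) := by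
  have key : ∀ u : Set ℝ, MeasurableSet u → u ⊆ Ioo (0:ℝ) 1 →
      ∫ x in u, W x = ∫ x, u.indicator W x ∂(volume.restrict (Ioo (0:ℝ) 1)) := by
    intro u hu husub
    rw [integral_indicator hu, Measure.restrict_restrict hu,
      inter_eq_self_of_subset_left husub]
  have h1 : (fun n => ∫ x in s n, W x)
      = fun n => ∫ x, (s n).indicator W x ∂(volume.restrict (Ioo (0:ℝ) 1)) :=
    funext fun n => key _ (hs n) (hssub n)
  rw [h1, key t ht htsub]
  refine tendsto_integral_of_dominated_convergence (fun x => ‖W x‖)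
    (fun n => hW.aestronglyMeasurable.indicator (hs n)) hW.norm
    (fun n => Eventually.of_forall fun x => norm_indicator_le_norm_self W x) ?_
  filter_upwards [ae_restrict_mem measurableSet_Ioo] with x hx using hpt x hx

private lemma aux_not_integrableOn_inv {δ : ℝ} (hδ : 0 < δ) :
    ¬ IntegrableOn (fun x : ℝ => x⁻¹) (Ioo 0 δ) := by
  intro h
  have h2 : IntervalIntegrable (fun x : ℝ => x⁻¹) volume 0 δ :=
    (intervalIntegrable_iff_integrableOn_Ioo_of_le hδ.le).2 h
  rw [intervalIntegrable_inv_iff] at h2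
  rcases h2 with h2 | h2
  · exact hδ.ne' h2.symm
  · exact h2 (by rw [uIcc_of_le hδ.le]; exact left_mem_Icc.2 hδ.le)

private lemma aux_not_integrableOn_inv' {δ : ℝ} (hδ : δ < 1) :
    ¬ IntegrableOn (fun x : ℝ => (1 - x)⁻¹) (Ioo δ 1) := by
  intro h
  have h1 : IntegrableOn (fun x : ℝ => (x - 1)⁻¹) (Ioo δ 1) := by
    have h2 := h.neg
    refine h2.congr (Eventually.of_forall fun x => ?_)
    simp only [Pi.neg_apply]
    rw [neg_inv, neg_sub]
  have h2 : IntervalIntegrable (fun x : ℝ => (x - 1)⁻¹) volume δ 1 :=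
    (intervalIntegrable_iff_integrableOn_Ioo_of_le hδ.le).2 h1
  rw [intervalIntegrable_sub_inv_iff] at h2
  rcases h2 with h2 | h2
  · exact hδ.ne h2
  · exact h2 (by rw [uIcc_of_le hδ.le]; exact right_mem_Icc.2 hδ.le)

private lemma aux_exists_small0 {L : ℝ → ℝ} (hL2 : IntegrableOn (fun x => L x ^ 2) (Ioo 0 1)) :
    ∀ n : ℕ, ∃ x : ℝ, x ∈ Ioo (0:ℝ) 1 ∧ x < 1 / (n + 1) ∧ x * L x ^ 2 < 1 / (n + 1) := by
  intro n
  set δ : ℝ := 1 / ((n : ℝ) + 1) with hδdef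
  have hδ0 : 0 < δ := by positivity
  have hδ1 : δ ≤ 1 := by
    rw [hδdef, div_le_one (by positivity)]
    linarith [Nat.cast_nonneg (α := ℝ) n]
  by_contra hcon
  push_neg at hcon
  have hbound : ∀ x ∈ Ioo (0:ℝ) δ, ‖δ * x⁻¹‖ ≤ L x ^ 2 := by
    intro x hx
    have hx0 : 0 < x := hx.1
    have h1 : δ ≤ x * L x ^ 2 := hcon x ⟨hx0, lt_of_lt_of_le hx.2 hδ1⟩ hx.2
    have h2 : δ / x ≤ L x ^ 2 := (div_le_iff₀ hx0).2 (by rwa [mul_comm] at h1)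
    rw [Real.norm_eq_abs, abs_of_nonneg (by positivity), ← div_eq_mul_inv]
    exact h2
  have hint : IntegrableOn (fun x : ℝ => δ * x⁻¹) (Ioo 0 δ) := by
    refine Integrable.mono' (hL2.mono_set (Ioo_subset_Ioo le_rfl hδ1)) ?_ ?_
    · exact (Measurable.aestronglyMeasurable (by measurability))
    · filter_upwards [ae_restrict_mem measurableSet_Ioo] with x hx using hbound x hx
  have hfin : IntegrableOn (fun x : ℝ => x⁻¹) (Ioo 0 δ) := by
    have h2 := hint.const_mul δ⁻¹
    refine h2.congr (Eventually.of_forall fun x => ?_)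
    field_simp
  exact aux_not_integrableOn_inv hδ0 hfin

private lemma aux_exists_small1 {L : ℝ → ℝ} (hL2 : IntegrableOn (fun x => L x ^ 2) (Ioo 0 1)) :
    ∀ n : ℕ, ∃ x : ℝ, x ∈ Ioo (0:ℝ) 1 ∧ 1 - 1 / (n + 1) < x ∧ (1 - x) * L x ^ 2 < 1 / (n + 1) := by
  intro n
  set ε : ℝ := 1 / ((n : ℝ) + 1) with hεdef
  have hε0 : 0 < ε := by positivity
  have hε1 : ε ≤ 1 := by
    rw [hεdef, div_le_one (by positivity)]
    linarith [Nat.cast_nonneg (α := ℝ) n]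
  by_contra hcon
  push_neg at hcon
  have hδ1 : 1 - ε < 1 := by linarith
  have hbound : ∀ x ∈ Ioo (1 - ε) (1:ℝ), ‖ε * (1 - x)⁻¹‖ ≤ L x ^ 2 := by
    intro x hx
    have hx0 : 0 < x := by have := hx.1; nlinarith
    have hx1 : 0 < 1 - x := by linarith [hx.2]
    have h1 : ε ≤ (1 - x) * L x ^ 2 := hcon x ⟨hx0, hx.2⟩ hx.1
    have h2 : ε / (1 - x) ≤ L x ^ 2 := (div_le_iff₀ hx1).2 (by rwa [mul_comm] at h1)
    rw [Real.norm_eq_abs, abs_of_nonneg (by positivity), ← div_eq_mul_inv]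
    exact h2
  have hint : IntegrableOn (fun x : ℝ => ε * (1 - x)⁻¹) (Ioo (1 - ε) 1) := by
    refine Integrable.mono' (hL2.mono_set (Ioo_subset_Ioo (by linarith) le_rfl)) ?_ ?_
    · exact (((measurable_const.sub measurable_id).inv.const_mul ε).aestronglyMeasurable)
    · filter_upwards [ae_restrict_mem measurableSet_Ioo] with x hx using hbound x hx
  have hfin : IntegrableOn (fun x : ℝ => (1 - x)⁻¹) (Ioo (1 - ε) 1) := by
    have h2 := hint.const_mul ε⁻¹
    refine h2.congr (Eventually.of_forall fun x => ?_)
    field_simp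
  exact aux_not_integrableOn_inv' hδ1 hfin

private lemma aux_L_mul_int {L : ℝ → ℝ} (hL1 : IntegrableOn L (Ioo 0 1))
    (hL2 : IntegrableOn (fun x => L x ^ 2) (Ioo 0 1)) {s : Set ℝ} (hs : MeasurableSet s)
    (hsub : s ⊆ Ioo 0 1) (c : ℝ) :
    |c * ∫ x in s, L x| ≤ ((∫ x in s, L x ^ 2) + (volume s).toReal * c ^ 2) / 2 := by
  have hvol : volume s < ⊤ :=
    lt_of_le_of_lt (measure_mono hsub) (by rw [Real.volume_Ioo]; exact ENNReal.ofReal_lt_top)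
  have hconst : IntegrableOn (fun _ : ℝ => c ^ 2) s := by
    exact integrableOn_const hvol.ne
  have hint1 : IntegrableOn (fun x => |c| * |L x|) s :=
    ((hL1.mono_set hsub).abs.const_mul _)
  have hint2 : IntegrableOn (fun x => (L x ^ 2 + c ^ 2) / 2) s :=
    ((hL2.mono_set hsub).add hconst).div_const 2
  have h1 : |∫ x in s, L x| ≤ ∫ x in s, |L x| := by
    simpa [Real.norm_eq_abs] using
      norm_integral_le_integral_norm (f := L) (μ := volume.restrict s)
  have h2 : ∫ x in s, |c| * |L x| ≤ ∫ x in s, (L x ^ 2 + c ^ 2) / 2 := by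
    refine setIntegral_mono_on hint1 hint2 hs ?_
    intro x hx
    have h3 := two_mul_le_add_sq |L x| |c|
    calc |c| * |L x| = 2 * |L x| * |c| / 2 := by ring
      _ ≤ (|L x| ^ 2 + |c| ^ 2) / 2 := by linarith
      _ = (L x ^ 2 + c ^ 2) / 2 := by rw [sq_abs, sq_abs]
  have h4 : ∫ x in s, (L x ^ 2 + c ^ 2) / 2
      = ((∫ x in s, L x ^ 2) + (volume s).toReal * c ^ 2) / 2 := by
    rw [integral_div, integral_add (hL2.mono_set hsub) hconst, setIntegral_const, smul_eq_mul]; rfl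
  calc |c * ∫ x in s, L x| = |c| * |∫ x in s, L x| := abs_mul _ _
    _ ≤ |c| * ∫ x in s, |L x| := by
        exact mul_le_mul_of_nonneg_left h1 (abs_nonneg c)
    _ = ∫ x in s, |c| * |L x| := (integral_const_mul _ _).symm
    _ ≤ ∫ x in s, (L x ^ 2 + c ^ 2) / 2 := h2
    _ = _ := h4

private lemma aux_split {L : ℝ → ℝ} (hL : IntegrableOn L (Ioo 0 1)) {w : ℝ}
    (hw : w ∈ Ioo (0:ℝ) 1) :
    ∫ x in Ioo w 1, L x = (∫ x in Ioo (0:ℝ) 1, L x) - ∫ x in Ioo (0:ℝ) w, L x := by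
  have hdisj : Disjoint (Ioc (0:ℝ) w) (Ioo w 1) :=
    disjoint_left.2 fun x hx hx' => absurd hx.2 (not_le.2 hx'.1)
  have hunion : Ioc (0:ℝ) w ∪ Ioo w 1 = Ioo 0 1 := Ioc_union_Ioo_eq_Ioo hw.1.le hw.2
  have h1 : IntegrableOn L (Ioc 0 w) :=
    hL.mono_set (by rw [← hunion]; exact subset_union_left)
  have h2 : IntegrableOn L (Ioo w 1) :=
    hL.mono_set (by rw [← hunion]; exact subset_union_right)
  have h3 := setIntegral_union hdisj measurableSet_Ioo h1 h2 (f := L) (μ := volume)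
  rw [hunion] at h3
  rw [h3, MeasureTheory.integral_Ioc_eq_integral_Ioo]
  ring

private lemma aux_logq (q : ℝ → ℝ) (hqpos : ∀ x ∈ Ioo (0:ℝ) 1, 0 < q x)
    (hqC1 : ContDiffOn ℝ 1 q (Ioo (0:ℝ) 1)) :
    (∀ x ∈ Ioo (0:ℝ) 1, HasDerivAt (fun y => Real.log (q y)) (deriv q x / q x) x) ∧
      ContinuousOn (fun x => deriv q x / q x) (Ioo (0:ℝ) 1) ∧
      ContinuousOn (fun x => Real.log (q x)) (Ioo (0:ℝ) 1) := by
  have hqd : DifferentiableOn ℝ q (Ioo 0 1) := hqC1.differentiableOn one_ne_zero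
  refine ⟨?_, ?_, ?_⟩
  · intro x hx
    have hqx : HasDerivAt q (deriv q x) x :=
      (hqd.differentiableAt (isOpen_Ioo.mem_nhds hx)).hasDerivAt
    exact hqx.log (hqpos x hx).ne'
  · exact (hqC1.continuousOn_deriv_of_isOpen isOpen_Ioo le_rfl).div hqC1.continuousOn
      fun x hx => (hqpos x hx).ne'
  · exact hqC1.continuousOn.log fun x hx => (hqpos x hx).ne'

private lemma aux_inner (q : ℝ → ℝ)
    (hqpos : ∀ x ∈ Ioo (0 : ℝ) 1, 0 < q x)
    (hqC1 : ContDiffOn ℝ 1 q (Ioo (0 : ℝ) 1))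
    (hlog : IntegrableOn (fun x => Real.log (q x)) (Ioo (0 : ℝ) 1))
    (hlim0 : Tendsto (fun t : ℝ => t * Real.log (q t)) (𝓝[>] 0) (𝓝 0))
    (hlim1 : Tendsto (fun t : ℝ => (1 - t) * Real.log (q t)) (𝓝[<] 1) (𝓝 0))
    {w : ℝ} (hw : w ∈ Ioo (0:ℝ) 1)
    (hint : IntegrableOn (fun x => (deriv q x / q x) * (min x w - x * w)) (Ioo (0:ℝ) 1)) :
    ∫ x in Ioo (0:ℝ) 1, (deriv q x / q x) * (min x w - x * w)
      = w * (∫ x in Ioo (0:ℝ) 1, Real.log (q x)) - ∫ x in Ioo (0:ℝ) w, Real.log (q x) := by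
  obtain ⟨hJd, hJc, hLc⟩ := aux_logq q hqpos hqC1
  obtain ⟨hw0, hw1⟩ := hw
  set a : ℕ → ℝ := fun n => w / ((n : ℝ) + 2) with hadef
  set b : ℕ → ℝ := fun n => 1 - (1 - w) / ((n : ℝ) + 2) with hbdef
  have hn2 : ∀ n : ℕ, (1:ℝ) < (n:ℝ) + 2 := fun n => by
    have := Nat.cast_nonneg (α := ℝ) n; linarith
  have ha_mem : ∀ n, a n ∈ Ioo (0:ℝ) w := fun n => by
    simp only [hadef]
    exact ⟨div_pos hw0 (by positivity), div_lt_self hw0 (hn2 n)⟩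
  have hb_mem : ∀ n, b n ∈ Ioo w (1:ℝ) := fun n => by
    have h1 : (1 - w) / ((n:ℝ) + 2) < 1 - w := div_lt_self (by linarith) (hn2 n)
    have h2 : 0 < (1 - w) / ((n:ℝ) + 2) := div_pos (by linarith) (by positivity)
    exact ⟨by simp only [hbdef]; linarith, by simp only [hbdef]; linarith⟩
  have hatop : Tendsto (fun n : ℕ => ((n:ℝ) + 2)) atTop atTop :=
    tendsto_atTop_add_const_right _ 2 tendsto_natCast_atTop_atTop
  have hinv : Tendsto (fun n : ℕ => ((n:ℝ) + 2)⁻¹) atTop (𝓝 0) :=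
    tendsto_inv_atTop_zero.comp hatop
  have ha0 : Tendsto a atTop (𝓝 0) := by
    have h2 := hinv.const_mul w
    rw [mul_zero] at h2
    exact h2.congr fun n => by rw [hadef]; simp [div_eq_mul_inv]
  have hb1 : Tendsto b atTop (𝓝 1) := by
    have h2 := hinv.const_mul (1 - w)
    rw [mul_zero] at h2
    have h3 := (tendsto_const_nhds (x := (1:ℝ)) (f := atTop)).sub h2
    rw [sub_zero] at h3
    exact h3.congr fun n => by rw [hbdef]; simp [div_eq_mul_inv]
  have hKcont : ContinuousOn (fun x => (deriv q x / q x) * (min x w - x * w)) (Ioo (0:ℝ) 1) :=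
    hJc.mul (((continuous_id.min continuous_const).sub
      (continuous_id.mul continuous_const)).continuousOn)
  -- the key integration-by-parts identity on compact subintervals
  have key : ∀ n, ∫ x in Ioo (a n) (b n), (deriv q x / q x) * (min x w - x * w)
      = -(a n * (1 - w) * Real.log (q (a n))) + w * (1 - b n) * Real.log (q (b n))
        - (1 - w) * (∫ x in Ioo (a n) w, Real.log (q x))
        + w * ∫ x in Ioo w (b n), Real.log (q x) := by
    intro n
    obtain ⟨han0, hanw⟩ := ha_mem n
    obtain ⟨hbnw, hbn1⟩ := hb_mem n
    have hIcc1 : Icc (a n) w ⊆ Ioo (0:ℝ) 1 := fun x hx =>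
      ⟨lt_of_lt_of_le han0 hx.1, lt_of_le_of_lt hx.2 hw1⟩
    have hIcc2 : Icc w (b n) ⊆ Ioo (0:ℝ) 1 := fun x hx =>
      ⟨lt_of_lt_of_le hw0 hx.1, lt_of_le_of_lt hx.2 hbn1⟩
    have hp1 : ∫ x in (a n)..w, (deriv q x / q x) * (min x w - x * w)
        = w * (1 - w) * Real.log (q w) - a n * (1 - w) * Real.log (q (a n))
          - (1 - w) * ∫ x in (a n)..w, Real.log (q x) := by
      have he : ∀ x ∈ uIcc (a n) w,
          (deriv q x / q x) * (min x w - x * w) = (x * (1 - w)) * (deriv q x / q x) := by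
        intro x hx
        rw [uIcc_of_le hanw.le] at hx
        rw [min_eq_left hx.2]; ring
      rw [intervalIntegral.integral_congr he]
      have hibp := intervalIntegral.integral_mul_deriv_eq_deriv_mul
        (u := fun x => x * (1 - w)) (u' := fun _ => (1 - w))
        (v := fun x => Real.log (q x)) (v' := fun x => deriv q x / q x)
        (fun x _ => hasDerivAt_mul_const (1 - w))
        (fun x hx => hJd x (hIcc1 (by rwa [uIcc_of_le hanw.le] at hx)))
        intervalIntegrable_const
        ((hJc.mono (by rw [uIcc_of_le hanw.le]; exact hIcc1)).intervalIntegrable)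
      rw [hibp, intervalIntegral.integral_const_mul]
      try ring
    have hp2 : ∫ x in w..(b n), (deriv q x / q x) * (min x w - x * w)
        = w * (1 - b n) * Real.log (q (b n)) - w * (1 - w) * Real.log (q w)
          + w * ∫ x in w..(b n), Real.log (q x) := by
      have he : ∀ x ∈ uIcc w (b n),
          (deriv q x / q x) * (min x w - x * w) = (w * (1 - x)) * (deriv q x / q x) := by
        intro x hx
        rw [uIcc_of_le hbnw.le] at hx
        rw [min_eq_right hx.1]; ring
      rw [intervalIntegral.integral_congr he]
      have hu : ∀ x ∈ uIcc w (b n), HasDerivAt (fun x : ℝ => w * (1 - x)) (-w) x := by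
        intro x _
        have h5 : HasDerivAt (fun x : ℝ => w * (1 - x)) (w * (-1)) x :=
          ((hasDerivAt_id x).const_sub 1).const_mul w
        simpa using h5
      have hibp := intervalIntegral.integral_mul_deriv_eq_deriv_mul
        (u := fun x => w * (1 - x)) (u' := fun _ => -w)
        (v := fun x => Real.log (q x)) (v' := fun x => deriv q x / q x)
        hu
        (fun x hx => hJd x (hIcc2 (by rwa [uIcc_of_le hbnw.le] at hx)))
        intervalIntegrable_const
        ((hJc.mono (by rw [uIcc_of_le hbnw.le]; exact hIcc2)).intervalIntegrable)
      rw [hibp, intervalIntegral.integral_const_mul]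
      ring
    have hadd : ∫ x in (a n)..(b n), (deriv q x / q x) * (min x w - x * w)
        = (∫ x in (a n)..w, (deriv q x / q x) * (min x w - x * w))
          + ∫ x in w..(b n), (deriv q x / q x) * (min x w - x * w) :=
      (intervalIntegral.integral_add_adjacent_intervals
        ((hKcont.mono (by rw [uIcc_of_le hanw.le]; exact hIcc1)).intervalIntegrable)
        ((hKcont.mono (by rw [uIcc_of_le hbnw.le]; exact hIcc2)).intervalIntegrable)).symm
    have e0 : ∫ x in Ioo (a n) (b n), (deriv q x / q x) * (min x w - x * w)
        = ∫ x in (a n)..(b n), (deriv q x / q x) * (min x w - x * w) := by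
      rw [intervalIntegral.integral_of_le (hanw.le.trans hbnw.le),
        MeasureTheory.integral_Ioc_eq_integral_Ioo]
    have e1 : ∫ x in (a n)..w, Real.log (q x) = ∫ x in Ioo (a n) w, Real.log (q x) := by
      rw [intervalIntegral.integral_of_le hanw.le, MeasureTheory.integral_Ioc_eq_integral_Ioo]
    have e2 : ∫ x in w..(b n), Real.log (q x) = ∫ x in Ioo w (b n), Real.log (q x) := by
      rw [intervalIntegral.integral_of_le hbnw.le, MeasureTheory.integral_Ioc_eq_integral_Ioo]
    rw [e0, hadd, hp1, hp2, e1, e2]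
    ring
  -- limits of each term
  have hT1 : Tendsto (fun n => ∫ x in Ioo (a n) (b n), (deriv q x / q x) * (min x w - x * w))
      atTop (𝓝 (∫ x in Ioo (0:ℝ) 1, (deriv q x / q x) * (min x w - x * w))) := by
    refine aux_tendsto_setIntegral hint _ _ (fun n => measurableSet_Ioo)
      (fun n => Ioo_subset_Ioo (ha_mem n).1.le (hb_mem n).2.le) measurableSet_Ioo
      subset_rfl ?_
    intro x hx
    rw [indicator_of_mem hx]
    refine Tendsto.congr' ?_ tendsto_const_nhds
    filter_upwards [ha0.eventually_lt_const hx.1, hb1.eventually_const_lt hx.2] with n h1n h2n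
    exact (indicator_of_mem (mem_Ioo.mpr ⟨h1n, h2n⟩)
      (fun x => (deriv q x / q x) * (min x w - x * w))).symm
  have hT4 : Tendsto (fun n => ∫ x in Ioo (a n) w, Real.log (q x)) atTop
      (𝓝 (∫ x in Ioo (0:ℝ) w, Real.log (q x))) := by
    refine aux_tendsto_setIntegral hlog _ _ (fun n => measurableSet_Ioo)
      (fun n => Ioo_subset_Ioo (ha_mem n).1.le hw1.le) measurableSet_Ioo
      (Ioo_subset_Ioo le_rfl hw1.le) ?_
    intro x hx
    by_cases hxw : x < w
    · rw [indicator_of_mem (mem_Ioo.mpr ⟨hx.1, hxw⟩)]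
      refine Tendsto.congr' ?_ tendsto_const_nhds
      filter_upwards [ha0.eventually_lt_const hx.1] with n hn
      exact (indicator_of_mem (mem_Ioo.mpr ⟨hn, hxw⟩) (fun x => Real.log (q x))).symm
    · rw [indicator_of_notMem (fun h => hxw h.2)]
      refine Tendsto.congr' (Eventually.of_forall fun n =>
        (indicator_of_notMem (fun h => hxw h.2) _).symm) tendsto_const_nhds
  have hT5 : Tendsto (fun n => ∫ x in Ioo w (b n), Real.log (q x)) atTop
      (𝓝 (∫ x in Ioo w (1:ℝ), Real.log (q x))) := by
    refine aux_tendsto_setIntegral hlog _ _ (fun n => measurableSet_Ioo)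
      (fun n => Ioo_subset_Ioo hw0.le (hb_mem n).2.le) measurableSet_Ioo
      (Ioo_subset_Ioo hw0.le le_rfl) ?_
    intro x hx
    by_cases hxw : w < x
    · rw [indicator_of_mem (mem_Ioo.mpr ⟨hxw, hx.2⟩)]
      refine Tendsto.congr' ?_ tendsto_const_nhds
      filter_upwards [hb1.eventually_const_lt hx.2] with n hn
      exact (indicator_of_mem (mem_Ioo.mpr ⟨hxw, hn⟩) (fun x => Real.log (q x))).symm
    · rw [indicator_of_notMem (fun h => hxw h.1)]
      refine Tendsto.congr' (Eventually.of_forall fun n =>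
        (indicator_of_notMem (fun h => hxw h.1) _).symm) tendsto_const_nhds
  have hta : Tendsto (fun n => a n * (1 - w) * Real.log (q (a n))) atTop (𝓝 0) := by
    have haw : Tendsto a atTop (𝓝[>] 0) :=
      tendsto_nhdsWithin_iff.2 ⟨ha0, Eventually.of_forall fun n => (ha_mem n).1⟩
    have h5 := (hlim0.comp haw).const_mul (1 - w)
    rw [mul_zero] at h5
    exact h5.congr fun n => by simp only [Function.comp]; ring
  have htb : Tendsto (fun n => w * (1 - b n) * Real.log (q (b n))) atTop (𝓝 0) := by
    have hbw : Tendsto b atTop (𝓝[<] 1) :=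
      tendsto_nhdsWithin_iff.2 ⟨hb1, Eventually.of_forall fun n => (hb_mem n).2⟩
    have h5 := (hlim1.comp hbw).const_mul w
    rw [mul_zero] at h5
    exact h5.congr fun n => by simp only [Function.comp]; ring
  have hsum : Tendsto (fun n => -(a n * (1 - w) * Real.log (q (a n)))
      + w * (1 - b n) * Real.log (q (b n))
      - (1 - w) * (∫ x in Ioo (a n) w, Real.log (q x))
      + w * ∫ x in Ioo w (b n), Real.log (q x)) atTop
      (𝓝 (-(0:ℝ) + 0 - (1 - w) * (∫ x in Ioo (0:ℝ) w, Real.log (q x))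
        + w * ∫ x in Ioo w (1:ℝ), Real.log (q x))) :=
    ((hta.neg.add htb).sub (hT4.const_mul (1 - w))).add (hT5.const_mul w)
  have heq := tendsto_nhds_unique (hT1.congr key) hsum
  rw [heq, aux_split hlog ⟨hw0, hw1⟩]
  ring

/-- If `q : (0,1) → (0,∞)` is continuously differentiable with
`∫_0^1 log² q < ∞` and score `J = q'/q`, and `t log q(t) → 0`, `(1-t) log q(t) → 0`
at the endpoints, then
`∫_0^1 ∫_0^1 J(u) J(v) (min(u,v) - uv) du dv = ∫_0^1 log² q - (∫_0^1 log q)²`. -/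
theorem variance_formula (q : ℝ → ℝ)
    (hqpos : ∀ x ∈ Set.Ioo (0 : ℝ) 1, 0 < q x)
    (hqC1 : ContDiffOn ℝ 1 q (Set.Ioo (0 : ℝ) 1))
    (hlog2 : IntegrableOn (fun x => Real.log (q x) ^ 2) (Set.Ioo (0 : ℝ) 1))
    (hlog : IntegrableOn (fun x => Real.log (q x)) (Set.Ioo (0 : ℝ) 1))
    (hJint : IntegrableOn
      (fun p : ℝ × ℝ =>
        (deriv q p.1 / q p.1) * (deriv q p.2 / q p.2) * (min p.1 p.2 - p.1 * p.2))
      (Set.Ioo (0 : ℝ) 1 ×ˢ Set.Ioo (0 : ℝ) 1))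
    (hlim0 : Tendsto (fun t : ℝ => t * Real.log (q t))
      (nhdsWithin 0 (Set.Ioi (0 : ℝ))) (nhds 0))
    (hlim1 : Tendsto (fun t : ℝ => (1 - t) * Real.log (q t))
      (nhdsWithin 1 (Set.Iio (1 : ℝ))) (nhds 0)) :
    (∫ u in Set.Ioo (0 : ℝ) 1, ∫ v in Set.Ioo (0 : ℝ) 1,
        (deriv q u / q u) * (deriv q v / q v) * (min u v - u * v))
      = (∫ x in Set.Ioo (0 : ℝ) 1, Real.log (q x) ^ 2)
        - (∫ x in Set.Ioo (0 : ℝ) 1, Real.log (q x)) ^ 2 := by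
  obtain ⟨hJd, hJc, hLc⟩ := aux_logq q hqpos hqC1
  set M : ℝ := ∫ x in Set.Ioo (0:ℝ) 1, Real.log (q x) with hMdef
  set G : ℝ → ℝ := fun w => w * M - ∫ x in Set.Ioo (0:ℝ) w, Real.log (q x) with hGdef
  -- product integrability w.r.t. the product of restricted measures
  have hprod : Integrable
      (fun p : ℝ × ℝ => (deriv q p.1 / q p.1) * (deriv q p.2 / q p.2)
        * (min p.1 p.2 - p.1 * p.2))
      ((volume.restrict (Set.Ioo (0:ℝ) 1)).prod (volume.restrict (Set.Ioo (0:ℝ) 1))) := by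
    rw [Measure.prod_restrict, ← Measure.volume_eq_prod]
    exact hJint
  have hae1 := hprod.prod_right_ae
  have hae2 : ∀ᵐ u ∂(volume.restrict (Set.Ioo (0:ℝ) 1)), u ∈ Set.Ioo (0:ℝ) 1 :=
    ae_restrict_mem measurableSet_Ioo
  have hstep1 : ∀ᵐ u ∂(volume.restrict (Set.Ioo (0:ℝ) 1)),
      (∫ v in Set.Ioo (0:ℝ) 1, (deriv q u / q u) * (deriv q v / q v) * (min u v - u * v))
        = (deriv q u / q u) * G u := by
    filter_upwards [hae1, hae2] with u hui hu
    by_cases hJu : deriv q u / q u = 0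
    · rw [hJu]; simp
    · have hv_int : IntegrableOn (fun v => (deriv q v / q v) * (min v u - v * u))
          (Set.Ioo (0:ℝ) 1) := by
        have h2 := hui.const_mul (deriv q u / q u)⁻¹
        refine h2.congr (Eventually.of_forall fun v => ?_)
        show (deriv q u / q u)⁻¹ * ((deriv q u / q u) * (deriv q v / q v)
          * (min u v - u * v)) = _
        rw [min_comm u v, mul_comm u v, ← mul_assoc, ← mul_assoc,
          inv_mul_cancel₀ hJu, one_mul]
      have hinner := aux_inner q hqpos hqC1 hlog hlim0 hlim1 hu hv_int
      rw [← hMdef] at hinner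
      calc (∫ v in Set.Ioo (0:ℝ) 1, (deriv q u / q u) * (deriv q v / q v) * (min u v - u * v))
          = ∫ v in Set.Ioo (0:ℝ) 1,
              (deriv q u / q u) * ((deriv q v / q v) * (min v u - v * u)) := by
            refine integral_congr_ae (Eventually.of_forall fun v => ?_)
            show (deriv q u / q u) * (deriv q v / q v) * (min u v - u * v)
              = (deriv q u / q u) * ((deriv q v / q v) * (min v u - v * u))
            rw [min_comm u v, mul_comm u v]; ring
        _ = (deriv q u / q u) * ∫ v in Set.Ioo (0:ℝ) 1,
              (deriv q v / q v) * (min v u - v * u) := integral_const_mul _ _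
        _ = (deriv q u / q u) * G u := by rw [hinner, hGdef]
  have hLHS := integral_congr_ae hstep1
  have hJG : IntegrableOn (fun u => (deriv q u / q u) * G u) (Set.Ioo (0:ℝ) 1) :=
    (hprod.integral_prod_left).congr hstep1
  -- derivative of G
  have hG' : ∀ x ∈ Set.Ioo (0:ℝ) 1, HasDerivAt G (M - Real.log (q x)) x := by
    intro x hx
    have hFi' : HasDerivAt (fun w => ∫ t in (0:ℝ)..w, Real.log (q t)) (Real.log (q x)) x := by
      refine intervalIntegral.integral_hasDerivAt_right ?_ ?_ ?_
      · exact (intervalIntegrable_iff_integrableOn_Ioc_of_le hx.1.le).2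
          (hlog.mono_set (fun y hy => ⟨hy.1, lt_of_le_of_lt hy.2 hx.2⟩))
      · exact ContinuousOn.stronglyMeasurableAtFilter isOpen_Ioo hLc x hx
      · exact hLc.continuousAt (isOpen_Ioo.mem_nhds hx)
    have h1 : HasDerivAt (fun w => w * M - ∫ t in (0:ℝ)..w, Real.log (q t))
        (M - Real.log (q x)) x := (hasDerivAt_mul_const M).sub hFi'
    refine h1.congr_of_eventuallyEq ?_
    filter_upwards [isOpen_Ioo.mem_nhds hx] with y hy
    rw [hGdef]
    show y * M - (∫ t in Set.Ioo (0:ℝ) y, Real.log (q t)) = _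
    rw [intervalIntegral.integral_of_le hy.1.le, MeasureTheory.integral_Ioc_eq_integral_Ioo]
  have hGc : ContinuousOn G (Set.Ioo (0:ℝ) 1) :=
    fun x hx => ((hG' x hx).continuousAt).continuousWithinAt
  have hLM : IntegrableOn (fun x => Real.log (q x) * (M - Real.log (q x)))
      (Set.Ioo (0:ℝ) 1) := by
    have h1 : IntegrableOn (fun x => M * Real.log (q x) - Real.log (q x) ^ 2)
        (Set.Ioo (0:ℝ) 1) := (hlog.const_mul M).sub hlog2
    exact h1.congr (Eventually.of_forall fun x => by ring)
  have hW : IntegrableOn (fun x => (deriv q x / q x) * G x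
      + Real.log (q x) * (M - Real.log (q x))) (Set.Ioo (0:ℝ) 1) := hJG.add hLM
  have hP : ∀ x ∈ Set.Ioo (0:ℝ) 1, HasDerivAt (fun y => Real.log (q y) * G y)
      ((deriv q x / q x) * G x + Real.log (q x) * (M - Real.log (q x))) x :=
    fun x hx => (hJd x hx).mul (hG' x hx)
  have hWc : ContinuousOn (fun x => (deriv q x / q x) * G x
      + Real.log (q x) * (M - Real.log (q x))) (Set.Ioo (0:ℝ) 1) :=
    (hJc.mul hGc).add (hLc.mul (continuousOn_const.sub hLc))
  -- boundary sequences
  choose a ha_mem ha_lt ha_small using aux_exists_small0 hlog2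
  choose b hb_mem hb_gt hb_small using aux_exists_small1 hlog2
  have h1n : Tendsto (fun n : ℕ => 1 / ((n:ℝ) + 1)) atTop (𝓝 0) :=
    tendsto_one_div_add_atTop_nhds_zero_nat
  have ha0 : Tendsto a atTop (𝓝 0) :=
    squeeze_zero (fun n => (ha_mem n).1.le) (fun n => (ha_lt n).le) h1n
  have hb1 : Tendsto b atTop (𝓝 1) := by
    have h2 : Tendsto (fun n => 1 - b n) atTop (𝓝 0) :=
      squeeze_zero (fun n => by linarith [(hb_mem n).2]) (fun n => by linarith [hb_gt n]) h1n
    have h3 := (tendsto_const_nhds (x := (1:ℝ)) (f := atTop)).sub h2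
    rw [sub_zero] at h3
    exact h3.congr fun n => by ring
  have haseq : Tendsto (fun n => a n * Real.log (q (a n))) atTop (𝓝 0) :=
    (hlim0.comp (tendsto_nhdsWithin_iff.2
      ⟨ha0, Eventually.of_forall fun n => (ha_mem n).1⟩)).congr fun n => rfl
  have hbseq : Tendsto (fun n => (1 - b n) * Real.log (q (b n))) atTop (𝓝 0) :=
    (hlim1.comp (tendsto_nhdsWithin_iff.2
      ⟨hb1, Eventually.of_forall fun n => (hb_mem n).2⟩)).congr fun n => rfl
  have hsmalla : Tendsto (fun n => a n * Real.log (q (a n)) ^ 2) atTop (𝓝 0) :=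
    squeeze_zero (fun n => mul_nonneg (ha_mem n).1.le (sq_nonneg _))
      (fun n => (ha_small n).le) h1n
  have hsmallb : Tendsto (fun n => (1 - b n) * Real.log (q (b n)) ^ 2) atTop (𝓝 0) :=
    squeeze_zero (fun n => mul_nonneg (by linarith [(hb_mem n).2]) (sq_nonneg _))
      (fun n => (hb_small n).le) h1n
  have htail0 : Tendsto (fun n => ∫ x in Set.Ioo (0:ℝ) (a n), Real.log (q x) ^ 2)
      atTop (𝓝 0) := by
    have h2 := aux_tendsto_setIntegral hlog2 (fun n => Set.Ioo 0 (a n)) ∅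
      (fun n => measurableSet_Ioo) (fun n => Set.Ioo_subset_Ioo le_rfl (ha_mem n).2.le)
      MeasurableSet.empty (Set.empty_subset _) ?_
    · simpa using h2
    · intro x hx
      simp only [Set.indicator_empty]
      refine Tendsto.congr' ?_ tendsto_const_nhds
      filter_upwards [ha0.eventually_lt_const hx.1] with n hn
      exact (Set.indicator_of_notMem (fun h => lt_asymm hn h.2)
        (fun x => Real.log (q x) ^ 2)).symm
  have htail1 : Tendsto (fun n => ∫ x in Set.Ioo (b n) (1:ℝ), Real.log (q x) ^ 2)
      atTop (𝓝 0) := by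
    have h2 := aux_tendsto_setIntegral hlog2 (fun n => Set.Ioo (b n) 1) ∅
      (fun n => measurableSet_Ioo) (fun n => Set.Ioo_subset_Ioo (hb_mem n).1.le le_rfl)
      MeasurableSet.empty (Set.empty_subset _) ?_
    · simpa using h2
    · intro x hx
      simp only [Set.indicator_empty]
      refine Tendsto.congr' ?_ tendsto_const_nhds
      filter_upwards [hb1.eventually_const_lt hx.2] with n hn
      exact (Set.indicator_of_notMem (fun h => lt_asymm hn h.1)
        (fun x => Real.log (q x) ^ 2)).symm
  -- boundary terms tend to zero
  have hterm_a : Tendsto (fun n => Real.log (q (a n)) * G (a n)) atTop (𝓝 0) := by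
    have hsplita : ∀ n, Real.log (q (a n)) * G (a n)
        = M * (a n * Real.log (q (a n)))
          - Real.log (q (a n)) * ∫ x in Set.Ioo (0:ℝ) (a n), Real.log (q x) := by
      intro n; simp only [hGdef]; ring
    have ht1 : Tendsto (fun n => M * (a n * Real.log (q (a n)))) atTop (𝓝 0) := by
      have h4 := haseq.const_mul M; rwa [mul_zero] at h4
    have ht2 : Tendsto
        (fun n => Real.log (q (a n)) * ∫ x in Set.Ioo (0:ℝ) (a n), Real.log (q x))
        atTop (𝓝 0) := by
      refine squeeze_zero_norm (a := fun n => ((∫ x in Set.Ioo (0:ℝ) (a n), Real.log (q x) ^ 2)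
        + a n * Real.log (q (a n)) ^ 2) / 2) (fun n => ?_) ?_
      · have hB := aux_L_mul_int hlog hlog2 measurableSet_Ioo
          (Set.Ioo_subset_Ioo le_rfl (ha_mem n).2.le) (Real.log (q (a n)))
        rw [Real.volume_Ioo, sub_zero, ENNReal.toReal_ofReal (ha_mem n).1.le] at hB
        simpa [Real.norm_eq_abs, abs_mul] using hB
      · have h6 := (htail0.add hsmalla).div_const 2
        simpa using h6
    have h7 := ht1.sub ht2
    rw [sub_zero] at h7
    exact h7.congr fun n => (hsplita n).symm
  have hterm_b : Tendsto (fun n => Real.log (q (b n)) * G (b n)) atTop (𝓝 0) := by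
    have hsplitb : ∀ n, Real.log (q (b n)) * G (b n)
        = Real.log (q (b n)) * (∫ x in Set.Ioo (b n) (1:ℝ), Real.log (q x))
          - M * ((1 - b n) * Real.log (q (b n))) := by
      intro n
      have h7 := aux_split hlog (hb_mem n)
      rw [← hMdef] at h7
      simp only [hGdef]
      rw [h7]; ring
    have ht1 : Tendsto (fun n => M * ((1 - b n) * Real.log (q (b n)))) atTop (𝓝 0) := by
      have h4 := hbseq.const_mul M; rwa [mul_zero] at h4
    have ht2 : Tendsto
        (fun n => Real.log (q (b n)) * ∫ x in Set.Ioo (b n) (1:ℝ), Real.log (q x))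
        atTop (𝓝 0) := by
      refine squeeze_zero_norm (a := fun n => ((∫ x in Set.Ioo (b n) (1:ℝ), Real.log (q x) ^ 2)
        + (1 - b n) * Real.log (q (b n)) ^ 2) / 2) (fun n => ?_) ?_
      · have hB := aux_L_mul_int hlog hlog2 measurableSet_Ioo
          (Set.Ioo_subset_Ioo (hb_mem n).1.le le_rfl) (Real.log (q (b n)))
        rw [Real.volume_Ioo,
          ENNReal.toReal_ofReal (by linarith [(hb_mem n).2] : (0:ℝ) ≤ 1 - b n)] at hB
        simpa [Real.norm_eq_abs, abs_mul] using hB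
      · have h6 := (htail1.add hsmallb).div_const 2
        simpa using h6
    have h8 := ht2.sub ht1
    rw [sub_zero] at h8
    exact h8.congr fun n => (hsplitb n).symm
  -- put it together
  have hev : ∀ᶠ n in atTop, a n < b n := ha0.eventually_lt hb1 one_pos
  have hWlim : Tendsto (fun n => ∫ x in Set.Ioo (a n) (b n),
      ((deriv q x / q x) * G x + Real.log (q x) * (M - Real.log (q x)))) atTop
      (𝓝 (∫ x in Set.Ioo (0:ℝ) 1,
        ((deriv q x / q x) * G x + Real.log (q x) * (M - Real.log (q x))))) := by
    refine aux_tendsto_setIntegral hW _ _ (fun n => measurableSet_Ioo)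
      (fun n => Set.Ioo_subset_Ioo (ha_mem n).1.le (hb_mem n).2.le) measurableSet_Ioo
      subset_rfl ?_
    intro x hx
    rw [Set.indicator_of_mem hx]
    refine Tendsto.congr' ?_ tendsto_const_nhds
    filter_upwards [ha0.eventually_lt_const hx.1, hb1.eventually_const_lt hx.2] with n h1n h2n
    exact (Set.indicator_of_mem (Set.mem_Ioo.mpr ⟨h1n, h2n⟩)
      (fun x => (deriv q x / q x) * G x + Real.log (q x) * (M - Real.log (q x)))).symm
  have hfund : ∀ᶠ n in atTop, (∫ x in Set.Ioo (a n) (b n),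
      ((deriv q x / q x) * G x + Real.log (q x) * (M - Real.log (q x))))
      = Real.log (q (b n)) * G (b n) - Real.log (q (a n)) * G (a n) := by
    filter_upwards [hev] with n hn
    have hsub : Set.uIcc (a n) (b n) ⊆ Set.Ioo (0:ℝ) 1 := by
      rw [Set.uIcc_of_le hn.le]
      exact fun x hx => ⟨lt_of_lt_of_le (ha_mem n).1 hx.1, lt_of_le_of_lt hx.2 (hb_mem n).2⟩
    have h9 := intervalIntegral.integral_eq_sub_of_hasDerivAt
      (f := fun y => Real.log (q y) * G y)
      (f' := fun x => (deriv q x / q x) * G x + Real.log (q x) * (M - Real.log (q x)))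
      (fun x hx => hP x (hsub hx))
      ((hWc.mono hsub).intervalIntegrable)
    rw [intervalIntegral.integral_of_le hn.le,
      MeasureTheory.integral_Ioc_eq_integral_Ioo] at h9
    exact h9
  have hzero : (∫ x in Set.Ioo (0:ℝ) 1,
      ((deriv q x / q x) * G x + Real.log (q x) * (M - Real.log (q x)))) = 0 := by
    have h10 : Tendsto (fun n => Real.log (q (b n)) * G (b n)
        - Real.log (q (a n)) * G (a n)) atTop (𝓝 0) := by
      have h11 := hterm_b.sub hterm_a; rwa [sub_zero] at h11
    exact tendsto_nhds_unique (hWlim.congr' hfund) h10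
  have hsum2 : (∫ x in Set.Ioo (0:ℝ) 1,
      ((deriv q x / q x) * G x + Real.log (q x) * (M - Real.log (q x))))
      = (∫ u in Set.Ioo (0:ℝ) 1, (deriv q u / q u) * G u)
        + ∫ x in Set.Ioo (0:ℝ) 1, Real.log (q x) * (M - Real.log (q x)) :=
    integral_add hJG hLM
  have hsum3 : (∫ x in Set.Ioo (0:ℝ) 1, Real.log (q x) * (M - Real.log (q x)))
      = M * M - ∫ x in Set.Ioo (0:ℝ) 1, Real.log (q x) ^ 2 := by
    have e : (∫ x in Set.Ioo (0:ℝ) 1, Real.log (q x) * (M - Real.log (q x)))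
        = ∫ x in Set.Ioo (0:ℝ) 1, (M * Real.log (q x) - Real.log (q x) ^ 2) :=
      integral_congr_ae (Eventually.of_forall fun x => by ring)
    rw [e, integral_sub (hlog.const_mul M) hlog2, integral_const_mul, ← hMdef]
  rw [hLHS]
  have hfin : (∫ u in Set.Ioo (0:ℝ) 1, (deriv q u / q u) * G u)
      + (M * M - ∫ x in Set.Ioo (0:ℝ) 1, Real.log (q x) ^ 2) = 0 := by
    rw [← hsum3, ← hsum2]; exact hzero
  have hM2 : M ^ 2 = M * M := sq M
  linarith [hfin]
end
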